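/- Let A be the (n+1)-dimensional n-ary algebra of type (C_2) over a field F, and let φ be a δ-derivation with δ ≠ ±1, matrix entries β_{ij}, and set θ = Σ_{i=1}^{n-1} β_{ii}. Then β_{nn} = δθ/(1-δ) − (βδ/(1+δ))·β_{n,n+1} and β_{n+1,n+1} = δθ/(1-δ) + (βδ/(1+δ))·β_{n,n+1}, and moreover (1-δ²)·β_{n,n+1} = (β²δ(δ-1)/(1+δ))·β_{n,n+1}. -/

import Mathlib

/-- Type `(C_2)`, `δ ≠ ±1`: formulas for `β_{nn}`, `β_{n+1,n+1}` and the
constraint `(1-δ²)β_{n,n+1} = (β²δ(δ-1)/(1+δ))·β_{n,n+1}`. -/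
theorem delta_derivation_C2_matrix
    {F A : Type*} [Field F] [AddCommGroup A] [Module F A]
    {n : ℕ} (hn : 2 ≤ n)
    (b : Module.Basis (Fin (n + 1)) F A)
    (βc : F) (hβc : βc ≠ 0)
    (br : AlternatingMap F A A (Fin n))
    (hbr : ∀ i : Fin (n + 1),
      br (b ∘ i.succAbove) =
        if (i : ℕ) = n - 1 then b i + βc • b (Fin.last n)
        else if (i : ℕ) = n then b (Fin.last n)
        else 0)
    (δ : F) (hδ1 : δ ≠ 1) (hδ2 : δ ≠ -1)
    (φ : A →ₗ[F] A)
    (hφ : ∀ x : Fin n → A,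
      φ (br x) = δ • ∑ i, br (Function.update x i (φ (x i))))
    (θ : F)
    (hθ : θ = ∑ k ∈ Finset.univ.filter (fun k : Fin (n + 1) => (k : ℕ) < n - 1),
      b.repr (φ (b k)) k) :
    b.repr (φ (b ⟨n - 1, by omega⟩)) ⟨n - 1, by omega⟩ =
      δ * θ / (1 - δ) - βc * δ / (1 + δ) * b.repr (φ (b ⟨n - 1, by omega⟩)) (Fin.last n) ∧
    b.repr (φ (b (Fin.last n))) (Fin.last n) =
      δ * θ / (1 - δ) + βc * δ / (1 + δ) * b.repr (φ (b ⟨n - 1, by omega⟩)) (Fin.last n) ∧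
    (1 - δ ^ 2) * b.repr (φ (b ⟨n - 1, by omega⟩)) (Fin.last n) =
      βc ^ 2 * δ * (δ - 1) / (1 + δ) * b.repr (φ (b ⟨n - 1, by omega⟩)) (Fin.last n) := by
  classical
  have hn1 : n - 1 < n + 1 := by omega
  set P : Fin (n + 1) := ⟨n - 1, hn1⟩ with hPdef
  set L : Fin (n + 1) := Fin.last n with hLdef
  set M : Fin n := ⟨n - 1, by omega⟩ with hMdef
  have hPval : (P : ℕ) = n - 1 := rfl
  have hLval : (L : ℕ) = n := rfl
  have hMval : (M : ℕ) = n - 1 := rfl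
  have hPLne : P ≠ L := fun h => by
    have := congrArg Fin.val h; rw [hPval, hLval] at this; omega
  have hLPne : L ≠ P := hPLne.symm
  have hMP : M.castSucc = P := by ext; simp [hMval, hPval]
  -- the "zero because of a missing index" lemma
  have hzero : ∀ g : Fin n → Fin (n + 1), Function.Injective g →
      ∀ m : Fin (n + 1), (∀ i, g i ≠ m) → (m : ℕ) ≠ n - 1 → (m : ℕ) ≠ n →
      br (b ∘ g) = 0 := by
    intro g hg m hm h1 h2
    choose σ hσ using fun i => Fin.exists_succAbove_eq (hm i)
    have hσinj : Function.Injective σ := fun i j hij => by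
      apply hg; rw [← hσ i, ← hσ j, hij]
    have hσbij : Function.Bijective σ := Finite.injective_iff_bijective.mp hσinj
    have hcomp : b ∘ g = (b ∘ m.succAbove) ∘ ⇑(Equiv.ofBijective σ hσbij) := by
      funext i
      show b (g i) = b (m.succAbove (σ i))
      rw [hσ i]
    rw [hcomp, AlternatingMap.map_perm, hbr m, if_neg h1, if_neg h2, smul_zero]
  -- expansion of an update by φ of a basis vector
  have hexp : ∀ (t : Fin n → A) (i : Fin n) (k : Fin (n + 1)),
      br (Function.update t i (φ (b k))) =
        ∑ j, b.repr (φ (b k)) j • br (Function.update t i (b j)) := by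
    intro t i k
    conv_lhs => rw [← Module.Basis.sum_repr b (φ (b k))]
    rw [br.map_update_sum]
    exact Finset.sum_congr rfl fun j _ => br.map_update_smul _ _ _ _
  -- the two distinguished tuples
  set v : Fin n → A := fun i => b i.castSucc with hvdef
  set u : Fin n → A := b ∘ P.succAbove with hudef
  have hbrv : br v = b L := by
    have hbv : b ∘ L.succAbove = v := by
      funext i
      show b ((Fin.last n).succAbove i) = v i
      rw [Fin.succAbove_last]
    have h := hbr L
    rw [hbv] at h
    rw [h, if_neg (by omega : ¬((L : ℕ) = n - 1)), if_pos hLval]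
  have hbru : br u = b P + βc • b L := by
    have h := hbr P
    rw [← hudef] at h
    rw [h, if_pos hPval]
  have hsA : ∀ i : Fin n, (i : ℕ) < n - 1 → P.succAbove i = i.castSucc := by
    intro i hi
    apply Fin.succAbove_of_castSucc_lt
    rw [Fin.lt_def]
    simpa [hPval] using hi
  have hsM : P.succAbove M = L := by
    rw [Fin.succAbove_of_le_castSucc _ _ (le_of_eq hMP.symm)]
    ext
    simp [hMval, hLval, Fin.val_succ]
    omega
  have hui : ∀ i : Fin n, (i : ℕ) < n - 1 → u i = b i.castSucc := by
    intro i hi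
    show b (P.succAbove i) = b i.castSucc
    rw [hsA i hi]
  have huM : u M = b L := by
    show b (P.succAbove M) = b L
    rw [hsM]
  have hiM' : ∀ i : Fin n, i ≠ M → (i : ℕ) < n - 1 := by
    intro i hiM
    have h2 := i.isLt
    by_contra hc
    exact hiM (Fin.ext (by omega))
  -- value of updates of v at basis vectors
  have hbrvz : ∀ (i : Fin n) (j : Fin (n + 1)), j ≠ i.castSucc → j ≠ L →
      br (Function.update v i (b j)) = 0 := by
    intro i j hj1 hj2
    have hjn : (j : ℕ) < n := by
      have hj := j.isLt
      by_contra h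
      exact hj2 (Fin.ext (by rw [hLval]; omega))
    set j' : Fin n := ⟨(j : ℕ), hjn⟩ with hj'def
    have hij' : i ≠ j' := by
      intro h
      apply hj1
      rw [h]
      exact Fin.ext rfl
    refine br.map_eq_zero_of_eq _ (?_ : Function.update v i (b j) i = Function.update v i (b j) j') hij'
    rw [Function.update_self, Function.update_of_ne (Ne.symm hij')]
    exact congrArg b (Fin.ext rfl)
  have hvdiag : ∀ i : Fin n, br (Function.update v i (b i.castSucc)) = b L := by
    intro i
    rw [show Function.update v i (b i.castSucc) = v from Function.update_eq_self i v, hbrv]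
  have hvL : ∀ i : Fin n, br (Function.update v i (b L)) =
      if i = M then b P + βc • b L else 0 := by
    intro i
    by_cases hiM : i = M
    · subst hiM
      rw [if_pos rfl]
      have hvu : Function.update v M (b L) = u := by
        funext k
        by_cases hk : k = M
        · subst hk; rw [Function.update_self, huM]
        · rw [Function.update_of_ne hk, hui k (hiM' k hk)]
      rw [hvu, hbru]
    · rw [if_neg hiM]
      have hi : (i : ℕ) < n - 1 := hiM' i hiM
      have hvg : Function.update v i (b L) =
          b ∘ (fun k => if k = i then L else k.castSucc) := by
        funext k
        by_cases hk : k = i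
        · subst hk; simp
        · simp [Function.update_of_ne hk, hk]; rfl
      rw [hvg]
      apply hzero _ ?_ i.castSucc ?_ ?_ ?_
      · intro k1 k2 h
        dsimp only at h
        by_cases h1 : k1 = i <;> by_cases h2 : k2 = i
        · rw [h1, h2]
        · exfalso
          rw [if_pos h1, if_neg h2] at h
          have := congrArg Fin.val h
          simp [hLval] at this
          have := k2.isLt
          omega
        · exfalso
          rw [if_neg h1, if_pos h2] at h
          have := congrArg Fin.val h
          simp [hLval] at this
          have := k1.isLt
          omega
        · rw [if_neg h1, if_neg h2] at h
          exact Fin.castSucc_injective _ h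
      · intro k
        by_cases hk : k = i
        · rw [if_pos hk]
          intro h
          have := congrArg Fin.val h
          simp [hLval] at this
          omega
        · rw [if_neg hk]
          intro h
          exact hk (Fin.castSucc_injective _ h)
      · simpa using (by omega : (i : ℕ) ≠ n - 1)
      · simpa using (by omega : (i : ℕ) ≠ n)
  -- inner sums for v
  have hinner_v : ∀ i : Fin n,
      br (Function.update v i (φ (v i))) =
        b.repr (φ (b i.castSucc)) i.castSucc • b L +
          (if i = M then b.repr (φ (b P)) L • (b P + βc • b L) else 0) := by
    intro i
    have h0 : φ (v i) = φ (b i.castSucc) := rfl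
    rw [h0, hexp]
    have hz : ∀ j ∈ Finset.univ, j ∉ ({i.castSucc, L} : Finset (Fin (n + 1))) →
        b.repr (φ (b i.castSucc)) j • br (Function.update v i (b j)) = 0 := by
      intro j _ hj
      simp only [Finset.mem_insert, Finset.mem_singleton, not_or] at hj
      rw [hbrvz i j hj.1 hj.2, smul_zero]
    rw [← Finset.sum_subset (Finset.subset_univ _) hz,
      Finset.sum_pair (Fin.castSucc_lt_last i).ne, hvdiag, hvL]
    by_cases hiM : i = M
    · subst hiM
      rw [if_pos rfl, if_pos rfl, hMP]
    · rw [if_neg hiM, if_neg hiM, smul_zero]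
  -- θ as a sum over Fin n
  have hθ' : ∑ i ∈ Finset.univ.filter (fun i : Fin n => (i : ℕ) < n - 1),
      b.repr (φ (b i.castSucc)) i.castSucc = θ := by
    rw [hθ]
    refine Finset.sum_nbij' (fun i => i.castSucc)
      (fun k => ⟨min (k : ℕ) (n - 2), by omega⟩) ?_ ?_ ?_ ?_ ?_
    · intro a ha
      simp only [Finset.mem_filter, Finset.mem_univ, true_and] at ha ⊢
      simpa using ha
    · intro a ha
      simp only [Finset.mem_filter, Finset.mem_univ, true_and] at ha ⊢
      simp
      omega
    · intro a ha
      simp only [Finset.mem_filter, Finset.mem_univ, true_and] at ha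
      ext
      simp
      omega
    · intro a ha
      simp only [Finset.mem_filter, Finset.mem_univ, true_and] at ha
      ext
      simp
      omega
    · intro a _
      rfl
  have hfiltM : Finset.univ.filter (fun i : Fin n => ¬(i : ℕ) < n - 1) = {M} := by
    ext i
    simp only [Finset.mem_filter, Finset.mem_univ, true_and, Finset.mem_singleton]
    constructor
    · intro h
      have := i.isLt
      exact Fin.ext (by omega)
    · intro h
      subst h
      omega
  have hsplit : (∑ i : Fin n, b.repr (φ (b i.castSucc)) i.castSucc) =
      θ + b.repr (φ (b P)) P := by
    rw [← Finset.sum_filter_add_sum_filter_not Finset.univ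
      (fun i : Fin n => (i : ℕ) < n - 1), hθ', hfiltM, Finset.sum_singleton, hMP]
  -- the equation from the tuple v
  have hEqv : φ (b L) = δ • ((θ + b.repr (φ (b P)) P) • b L +
      b.repr (φ (b P)) L • (b P + βc • b L)) := by
    have h := hφ v
    rw [hbrv] at h
    rw [h]
    congr 1
    rw [Finset.sum_congr rfl fun i _ => hinner_v i, Finset.sum_add_distrib,
      ← Finset.sum_smul, hsplit]
    congr 1
    simp
  -- values of updates of u
  have huz1 : ∀ i : Fin n, (i : ℕ) < n - 1 → ∀ j : Fin (n + 1), j ≠ i.castSucc →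
      br (Function.update u i (b j)) = 0 := by
    intro i hi j hj
    have hiMne : i ≠ M := fun h => by rw [h, hMval] at hi; omega
    by_cases hjL : j = L
    · subst hjL
      refine br.map_eq_zero_of_eq _
        (?_ : Function.update u i (b L) i = Function.update u i (b L) M) hiMne
      rw [Function.update_self, Function.update_of_ne (Ne.symm hiMne), huM]
    · by_cases hjP : j = P
      · subst hjP
        have hug : Function.update u i (b P) =
            b ∘ (fun k => if k = i then P else P.succAbove k) := by
          funext k
          by_cases hk : k = i
          · subst hk; simp
          · rw [Function.update_of_ne hk]
            show u k = b (if k = i then P else P.succAbove k)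
            rw [if_neg hk]
            rfl
        rw [hug]
        apply hzero _ ?_ i.castSucc ?_ ?_ ?_
        · intro k1 k2 h
          dsimp only at h
          by_cases h1 : k1 = i <;> by_cases h2 : k2 = i
          · rw [h1, h2]
          · exfalso
            rw [if_pos h1, if_neg h2] at h
            exact Fin.succAbove_ne P k2 h.symm
          · exfalso
            rw [if_neg h1, if_pos h2] at h
            exact Fin.succAbove_ne P k1 h
          · rw [if_neg h1, if_neg h2] at h
            exact Fin.succAbove_right_injective h
        · intro k
          by_cases hk : k = i
          · rw [if_pos hk]
            intro h
            have := congrArg Fin.val h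
            simp [hPval] at this
            omega
          · rw [if_neg hk]
            intro h
            rw [← hsA i hi] at h
            exact hk (Fin.succAbove_right_injective h)
        · simpa using (by omega : (i : ℕ) ≠ n - 1)
        · simpa using (by omega : (i : ℕ) ≠ n)
      · -- j.val < n - 1, j ≠ i.castSucc
        have hjn : (j : ℕ) < n - 1 := by
          have h1 := j.isLt
          have h2 : (j : ℕ) ≠ n := fun h => hjL (Fin.ext (by rw [hLval]; omega))
          have h3 : (j : ℕ) ≠ n - 1 := fun h => hjP (Fin.ext (by rw [hPval]; omega))
          omega
        set j' : Fin n := ⟨(j : ℕ), by omega⟩ with hj'def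
        have hij' : i ≠ j' := by
          intro h
          apply hj
          rw [h]
          exact Fin.ext rfl
        refine br.map_eq_zero_of_eq _
          (?_ : Function.update u i (b j) i = Function.update u i (b j) j') hij'
        rw [Function.update_self, Function.update_of_ne (Ne.symm hij'),
          hui j' (by simpa [hj'def] using hjn)]
        exact congrArg b (Fin.ext rfl)
  have hu_diag : ∀ i : Fin n, (i : ℕ) < n - 1 →
      br (Function.update u i (b i.castSucc)) = b P + βc • b L := by
    intro i hi
    rw [show Function.update u i (b i.castSucc) = u by
      rw [← hui i hi]; exact Function.update_eq_self i u, hbru]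
  have huM1 : br (Function.update u M (b L)) = b P + βc • b L := by
    rw [show Function.update u M (b L) = u by
      rw [← huM]; exact Function.update_eq_self M u, hbru]
  have huM2 : br (Function.update u M (b P)) = b L := by
    have huv : Function.update u M (b P) = v := by
      funext k
      by_cases hk : k = M
      · subst hk
        rw [Function.update_self]
        show b P = b M.castSucc
        rw [hMP]
      · rw [Function.update_of_ne hk, hui k (hiM' k hk)]
    rw [huv, hbrv]
  have huMz : ∀ j : Fin (n + 1), j ≠ L → j ≠ P →
      br (Function.update u M (b j)) = 0 := by
    intro j hjL hjP
    have hjn : (j : ℕ) < n - 1 := by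
      have h1 := j.isLt
      have h2 : (j : ℕ) ≠ n := fun h => hjL (Fin.ext (by rw [hLval]; omega))
      have h3 : (j : ℕ) ≠ n - 1 := fun h => hjP (Fin.ext (by rw [hPval]; omega))
      omega
    set j' : Fin n := ⟨(j : ℕ), by omega⟩ with hj'def
    have hMj' : M ≠ j' := by
      intro h
      have := congrArg Fin.val h
      simp [hj'def, hMval] at this
      omega
    refine br.map_eq_zero_of_eq _
      (?_ : Function.update u M (b j) M = Function.update u M (b j) j') hMj'
    rw [Function.update_self, Function.update_of_ne (Ne.symm hMj'),
      hui j' (by simpa [hj'def] using hjn)]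
    exact congrArg b (Fin.ext rfl)
  -- inner sums for u
  have hinner_u : ∀ i : Fin n,
      br (Function.update u i (φ (u i))) =
        (if i = M then
          b.repr (φ (b L)) L • (b P + βc • b L) + b.repr (φ (b L)) P • b L
        else b.repr (φ (b i.castSucc)) i.castSucc • (b P + βc • b L)) := by
    intro i
    by_cases hiM : i = M
    · subst hiM
      rw [if_pos rfl, show φ (u M) = φ (b L) by rw [huM], hexp]
      have hz : ∀ j ∈ Finset.univ, j ∉ ({L, P} : Finset (Fin (n + 1))) →
          b.repr (φ (b L)) j • br (Function.update u M (b j)) = 0 := by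
        intro j _ hj
        simp only [Finset.mem_insert, Finset.mem_singleton, not_or] at hj
        rw [huMz j hj.1 hj.2, smul_zero]
      rw [← Finset.sum_subset (Finset.subset_univ _) hz, Finset.sum_pair hLPne,
        huM1, huM2]
    · have hi := hiM' i hiM
      rw [if_neg hiM, show φ (u i) = φ (b i.castSucc) by rw [hui i hi], hexp]
      have hz : ∀ j ∈ Finset.univ, j ∉ ({i.castSucc} : Finset (Fin (n + 1))) →
          b.repr (φ (b i.castSucc)) j • br (Function.update u i (b j)) = 0 := by
        intro j _ hj
        simp only [Finset.mem_singleton] at hj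
        rw [huz1 i hi j hj, smul_zero]
      rw [← Finset.sum_subset (Finset.subset_univ _) hz, Finset.sum_singleton,
        hu_diag i hi]
  -- the equation from the tuple u
  have hEqu : φ (b P) + βc • φ (b L) =
      δ • ((θ + b.repr (φ (b L)) L) • (b P + βc • b L) +
        b.repr (φ (b L)) P • b L) := by
    have h := hφ u
    rw [hbru, map_add, map_smul] at h
    rw [h]
    congr 1
    rw [Finset.sum_congr rfl fun i _ => hinner_u i, Finset.sum_ite]
    have h1 : Finset.univ.filter (fun i : Fin n => i = M) = {M} := by
      ext i; simp
    have h2 : Finset.univ.filter (fun i : Fin n => ¬i = M) =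
        Finset.univ.filter (fun i : Fin n => (i : ℕ) < n - 1) := by
      ext i
      simp only [Finset.mem_filter, Finset.mem_univ, true_and]
      constructor
      · exact hiM' i
      · intro h hc
        rw [hc, hMval] at h
        omega
    rw [h1, h2, Finset.sum_singleton, ← Finset.sum_smul, hθ', add_smul]
    abel
  -- extract scalar equations
  have hval : ∀ j k : Fin (n + 1), b.repr (b j) k = if j = k then 1 else 0 := by
    intro j k
    rw [b.repr_self, Finsupp.single_apply]
  have E1 : b.repr (φ (b L)) L =
      δ * ((θ + b.repr (φ (b P)) P) + βc * b.repr (φ (b P)) L) := by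
    have h := congrArg (fun x => b.repr x L) hEqv
    simp only [map_add, map_smul, Finsupp.add_apply, Finsupp.smul_apply,
      smul_eq_mul, hval, if_pos rfl, if_neg hPLne, eq_self_iff_true, if_true, mul_one, mul_zero,
      add_zero, zero_add] at h
    linear_combination h
  have E2 : b.repr (φ (b L)) P = δ * b.repr (φ (b P)) L := by
    have h := congrArg (fun x => b.repr x P) hEqv
    simp only [map_add, map_smul, Finsupp.add_apply, Finsupp.smul_apply,
      smul_eq_mul, hval, if_pos rfl, if_neg hLPne, eq_self_iff_true, if_true, mul_one, mul_zero,
      add_zero, zero_add] at h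
    linear_combination h
  have E3 : b.repr (φ (b P)) P + βc * b.repr (φ (b L)) P =
      δ * (θ + b.repr (φ (b L)) L) := by
    have h := congrArg (fun x => b.repr x P) hEqu
    simp only [map_add, map_smul, Finsupp.add_apply, Finsupp.smul_apply,
      smul_eq_mul, hval, if_pos rfl, if_neg hLPne, eq_self_iff_true, if_true, mul_one, mul_zero,
      add_zero, zero_add] at h
    linear_combination h
  have E4 : b.repr (φ (b P)) L + βc * b.repr (φ (b L)) L =
      δ * ((θ + b.repr (φ (b L)) L) * βc + b.repr (φ (b L)) P) := by
    have h := congrArg (fun x => b.repr x L) hEqu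
    simp only [map_add, map_smul, Finsupp.add_apply, Finsupp.smul_apply,
      smul_eq_mul, hval, if_pos rfl, if_neg hPLne, eq_self_iff_true, if_true, mul_one, mul_zero,
      add_zero, zero_add] at h
    linear_combination h
  -- final algebra
  have h1 : (1 : F) - δ ≠ 0 := fun h => hδ1 (by linear_combination -h)
  have h2 : (1 : F) + δ ≠ 0 := fun h => hδ2 (by linear_combination h)
  have G1 : b.repr (φ (b P)) P =
      δ * θ / (1 - δ) - βc * δ / (1 + δ) * b.repr (φ (b P)) L := by
    field_simp
    linear_combination E3 + δ * E1 - βc * E2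
  have G2 : b.repr (φ (b L)) L =
      δ * θ / (1 - δ) + βc * δ / (1 + δ) * b.repr (φ (b P)) L := by
    field_simp
    linear_combination E1 + δ * E3 - δ * βc * E2
  have G3 : (1 - δ ^ 2) * b.repr (φ (b P)) L =
      βc ^ 2 * δ * (δ - 1) / (1 + δ) * b.repr (φ (b P)) L := by
    field_simp
    linear_combination (1 + δ) * E4 + δ * (1 + δ) * E2 - βc * E1 -
      δ * βc * E3 + δ * βc ^ 2 * E2
  exact ⟨G1, G2, G3⟩
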